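/- arXiv:0909.1255 — 10 statements merged into one kernel-verified Lean document; each statement's English description precedes it below -/
import Mathlib

section
/- If S is a T-Zamfirescu mapping on a cone metric space (M,d), then there exists δ with 0 ≤ δ < 1 such that d(TSx, TSy) ≤ δ·d(Tx,Ty) + 2δ·d(Tx,TSx) for all x,y ∈ M. -/
open Filter Topology

variable {E : Type*}

/-- A cone in a real Banach space. -/
def IsCone [NormedAddCommGroup E] [NormedSpace ℝ E] (P : Set E) : Prop :=
  IsClosed P ∧ P.Nonempty ∧ P ≠ {0} ∧
  (∀ (a b : ℝ), 0 ≤ a → 0 ≤ b → ∀ x ∈ P, ∀ y ∈ P, a • x + b • y ∈ P) ∧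
  (∀ x, x ∈ P → -x ∈ P → x = 0)

/-- The partial order induced by the cone `P`: `x ≤ y` iff `y - x ∈ P`. -/
def coneLe [NormedAddCommGroup E] (P : Set E) (x y : E) : Prop := y - x ∈ P

/-- `x ≪ y` iff `y - x ∈ int P`. -/
def coneLt [NormedAddCommGroup E] (P : Set E) (x y : E) : Prop := y - x ∈ interior P

/-- A normal cone with normal constant `K`. -/
def IsNormalCone [NormedAddCommGroup E] (P : Set E) (K : ℝ) : Prop :=
  0 < K ∧ ∀ x y : E, coneLe P 0 x → coneLe P x y → ‖x‖ ≤ K * ‖y‖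

/-- A cone metric on `M` with values in `E`, relative to the cone `P`. -/
def IsConeMetric [NormedAddCommGroup E] {M : Type*} (P : Set E) (d : M → M → E) : Prop :=
  (∀ x y : M, coneLe P 0 (d x y)) ∧
  (∀ x y : M, d x y = 0 ↔ x = y) ∧
  (∀ x y : M, d x y = d y x) ∧
  (∀ x y z : M, coneLe P (d x y) (d x z + d z y))

/-- Convergence of a sequence in a cone metric space. -/
def ConeConverges [NormedAddCommGroup E] {M : Type*} (P : Set E) (d : M → M → E)
    (s : ℕ → M) (x : M) : Prop :=
  ∀ c : E, coneLt P 0 c → ∃ n₀ : ℕ, ∀ n > n₀, coneLt P (d (s n) x) c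

/-- Cauchy sequence in a cone metric space. -/
def ConeCauchy [NormedAddCommGroup E] {M : Type*} (P : Set E) (d : M → M → E)
    (s : ℕ → M) : Prop :=
  ∀ c : E, coneLt P 0 c → ∃ n₀ : ℕ, ∀ n ≥ n₀, ∀ m ≥ n₀, coneLt P (d (s n) (s m)) c

/-- Completeness of a cone metric space. -/
def ConeComplete [NormedAddCommGroup E] {M : Type*} (P : Set E) (d : M → M → E) : Prop :=
  ∀ s : ℕ → M, ConeCauchy P d s → ∃ x : M, ConeConverges P d s x

/-- Continuity of a self-map of a cone metric space. -/
def ConeContinuous [NormedAddCommGroup E] {M : Type*} (P : Set E) (d : M → M → E)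
    (T : M → M) : Prop :=
  ∀ (s : ℕ → M) (x : M), ConeConverges P d s x → ConeConverges P d (fun n => T (s n)) (T x)

/-- `T` is subsequentially convergent. -/
def SubseqConvergent [NormedAddCommGroup E] {M : Type*} (P : Set E) (d : M → M → E)
    (T : M → M) : Prop :=
  ∀ s : ℕ → M, (∃ y, ConeConverges P d (fun n => T (s n)) y) →
    ∃ φ : ℕ → ℕ, StrictMono φ ∧ ∃ z, ConeConverges P d (fun n => s (φ n)) z

/-- `T` is sequentially convergent. -/
def SeqConvergent [NormedAddCommGroup E] {M : Type*} (P : Set E) (d : M → M → E)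
    (T : M → M) : Prop :=
  ∀ s : ℕ → M, (∃ y, ConeConverges P d (fun n => T (s n)) y) →
    ∃ z, ConeConverges P d s z

/-- `S` is a `T`-Zamfirescu mapping. -/
def TZamfirescu [NormedAddCommGroup E] [NormedSpace ℝ E] {M : Type*} (P : Set E)
    (d : M → M → E) (T S : M → M) : Prop :=
  ∃ a b c : ℝ, 0 ≤ a ∧ a < 1 ∧ 0 ≤ b ∧ b < 1/2 ∧ 0 ≤ c ∧ c < 1/2 ∧
    ∀ x y : M,
      coneLe P (d (T (S x)) (T (S y))) (a • d (T x) (T y)) ∨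
      coneLe P (d (T (S x)) (T (S y))) (b • (d (T x) (T (S x)) + d (T y) (T (S y)))) ∨
      coneLe P (d (T (S x)) (T (S y))) (c • (d (T x) (T (S y)) + d (T y) (T (S x))))

/-- `S` is a `T`-weak contraction. -/
def TWeakContraction [NormedAddCommGroup E] [NormedSpace ℝ E] {M : Type*} (P : Set E)
    (d : M → M → E) (T S : M → M) : Prop :=
  ∃ δ L : ℝ, 0 < δ ∧ δ < 1 ∧ 0 ≤ L ∧
    ∀ x y : M, coneLe P (d (T (S x)) (T (S y))) (δ • d (T x) (T y) + L • d (T y) (T (S x)))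

theorem tz_weak_ineq_left {E M : Type*} [NormedAddCommGroup E] [NormedSpace ℝ E]
    [CompleteSpace E] (P : Set E) (hP : IsCone P) (d : M → M → E)
    (hd : IsConeMetric P d) (T S : M → M) (hTZ : TZamfirescu P d T S) :
    ∃ δ : ℝ, 0 ≤ δ ∧ δ < 1 ∧ ∀ x y : M,
      coneLe P (d (T (S x)) (T (S y)))
        (δ • d (T x) (T y) + (2 * δ) • d (T x) (T (S x))) := by
  obtain ⟨a, b, c, ha0, ha1, hb0, hb1, hc0, hc1, hZ⟩ := hTZ
  obtain ⟨-, -, -, hcomb, -⟩ := hP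
  have hmem_add : ∀ x ∈ P, ∀ y ∈ P, x + y ∈ P := by
    intro x hx y hy
    simpa using hcomb 1 1 zero_le_one zero_le_one x hx y hy
  have hmem_smul : ∀ t : ℝ, 0 ≤ t → ∀ x ∈ P, t • x ∈ P := by
    intro t ht x hx
    simpa using hcomb t 0 ht le_rfl x hx x hx
  obtain ⟨hpos, heq, hsymm, htri⟩ := hd
  have hb' : (0:ℝ) < 1 - b := by linarith
  have hc' : (0:ℝ) < 1 - c := by linarith
  set β := b / (1 - b) with hβdef
  set γ := c / (1 - c) with hγdef
  have hβ0 : 0 ≤ β := div_nonneg hb0 hb'.le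
  have hγ0 : 0 ≤ γ := div_nonneg hc0 hc'.le
  have hβ1 : β < 1 := by rw [hβdef, div_lt_one hb']; linarith
  have hγ1 : γ < 1 := by rw [hγdef, div_lt_one hc']; linarith
  set δ := max a (max β γ) with hδdef
  have hδ0 : 0 ≤ δ := le_trans ha0 (le_max_left _ _)
  have hδ1 : δ < 1 := by
    apply max_lt ha1 (max_lt hβ1 hγ1)
  refine ⟨δ, hδ0, hδ1, fun x y => ?_⟩
  set D := d (T (S x)) (T (S y)) with hD
  set A := d (T x) (T y) with hA
  set B := d (T x) (T (S x)) with hB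
  have hAP : A ∈ P := by simpa [coneLe] using hpos (T x) (T y)
  have hBP : B ∈ P := by simpa [coneLe] using hpos (T x) (T (S x))
  show δ • A + (2 * δ) • B - D ∈ P
  have key : ∀ e : ℝ, 0 ≤ e → e ≤ δ → e • A + (2 * e) • B - D ∈ P →
      δ • A + (2 * δ) • B - D ∈ P := by
    intro e he0 heδ h
    have h2 : (e • A + (2 * e) • B - D) + ((δ - e) • A + (2 * (δ - e)) • B) ∈ P :=
      hmem_add _ h _ (hmem_add _ (hmem_smul _ (by linarith) _ hAP) _
        (hmem_smul _ (by linarith) _ hBP))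
    have h3 : (e • A + (2 * e) • B - D) + ((δ - e) • A + (2 * (δ - e)) • B)
        = δ • A + (2 * δ) • B - D := by module
    rwa [h3] at h2
  rcases hZ x y with h | h | h
  · -- case TZ1
    refine key a ha0 (le_max_left _ _) ?_
    have h2 : (a • A - D) + (2 * a) • B ∈ P :=
      hmem_add _ h _ (hmem_smul _ (by linarith) _ hBP)
    have h3 : (a • A - D) + (2 * a) • B = a • A + (2 * a) • B - D := by module
    rwa [h3] at h2
  · -- case TZ2
    refine key β hβ0 (le_trans (le_max_left _ _) (le_max_right _ _)) ?_
    -- h : b • (B + d (T y) (T (S y))) - D ∈ P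
    have t1 : (d (T y) (T x) + d (T x) (T (S y))) - d (T y) (T (S y)) ∈ P :=
      htri (T y) (T (S y)) (T x)
    have t2 : (B + D) - d (T x) (T (S y)) ∈ P := htri (T x) (T (S y)) (T (S x))
    have hsy : d (T y) (T x) = A := hsymm _ _
    have m : (A + B + D) - d (T y) (T (S y)) ∈ P := by
      have := hmem_add _ t1 _ t2
      rw [hsy] at this
      have h3 : (A + d (T x) (T (S y)) - d (T y) (T (S y))) + (B + D - d (T x) (T (S y)))
          = (A + B + D) - d (T y) (T (S y)) := by abel
      rwa [h3] at this
    have comb : (b • (B + d (T y) (T (S y))) - D) + b • ((A + B + D) - d (T y) (T (S y)))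
        ∈ P := hmem_add _ h _ (hmem_smul _ hb0 _ m)
    have h3 : (b • (B + d (T y) (T (S y))) - D) + b • ((A + B + D) - d (T y) (T (S y)))
        = b • A + (2 * b) • B - (1 - b) • D := by module
    rw [h3] at comb
    have sc : (1 - b)⁻¹ • (b • A + (2 * b) • B - (1 - b) • D)
        = β • A + (2 * β) • B - D := by
      rw [hβdef]
      match_scalars <;> field_simp
    have := hmem_smul _ (inv_nonneg.mpr hb'.le) _ comb
    rwa [sc] at this
  · -- case TZ3
    refine key γ hγ0 (le_trans (le_max_right _ _) (le_max_right _ _)) ?_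
    -- h : c • (d (T x) (T (S y)) + d (T y) (T (S x))) - D ∈ P
    have t1 : (B + D) - d (T x) (T (S y)) ∈ P := htri (T x) (T (S y)) (T (S x))
    have t2 : (d (T y) (T x) + d (T x) (T (S x))) - d (T y) (T (S x)) ∈ P :=
      htri (T y) (T (S x)) (T x)
    have hsy : d (T y) (T x) = A := hsymm _ _
    have m : (A + B + (B + D)) - (d (T x) (T (S y)) + d (T y) (T (S x))) ∈ P := by
      have := hmem_add _ t1 _ t2
      rw [hsy] at this
      have h3 : (B + D - d (T x) (T (S y))) + (A + B - d (T y) (T (S x)))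
          = (A + B + (B + D)) - (d (T x) (T (S y)) + d (T y) (T (S x))) := by abel
      rwa [h3] at this
    have comb : (c • (d (T x) (T (S y)) + d (T y) (T (S x))) - D)
        + c • ((A + B + (B + D)) - (d (T x) (T (S y)) + d (T y) (T (S x)))) ∈ P :=
      hmem_add _ h _ (hmem_smul _ hc0 _ m)
    have h3 : (c • (d (T x) (T (S y)) + d (T y) (T (S x))) - D)
        + c • ((A + B + (B + D)) - (d (T x) (T (S y)) + d (T y) (T (S x))))
        = c • A + (2 * c) • B - (1 - c) • D := by module
    rw [h3] at comb
    have sc : (1 - c)⁻¹ • (c • A + (2 * c) • B - (1 - c) • D)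
        = γ • A + (2 * γ) • B - D := by
      rw [hγdef]
      match_scalars <;> field_simp
    have := hmem_smul _ (inv_nonneg.mpr hc'.le) _ comb
    rwa [sc] at this
end

section
/- If S is a T-Zamfirescu mapping on a cone metric space (M,d), then there exists δ with 0 ≤ δ < 1 such that d(TSx, TSy) ≤ δ·d(Tx,Ty) + 2δ·d(Tx,TSy) for all x,y ∈ M. -/
open Filter Topology

variable {E : Type*}

theorem tz_weak_ineq_right {E M : Type*} [NormedAddCommGroup E] [NormedSpace ℝ E]
    [CompleteSpace E] (P : Set E) (hP : IsCone P) (d : M → M → E)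
    (hd : IsConeMetric P d) (T S : M → M) (hTZ : TZamfirescu P d T S) :
    ∃ δ : ℝ, 0 ≤ δ ∧ δ < 1 ∧ ∀ x y : M,
      coneLe P (d (T (S x)) (T (S y)))
        (δ • d (T x) (T y) + (2 * δ) • d (T x) (T (S y))) := by
  obtain ⟨a, b, c, ha0, ha1, hb0, hb1, hc0, hc1, hZ⟩ := hTZ
  obtain ⟨-, -, -, hcomb, -⟩ := hP
  obtain ⟨hd0, -, hsymm, htri⟩ := hd
  have Psmul : ∀ r : ℝ, 0 ≤ r → ∀ x ∈ P, r • x ∈ P := by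
    intro r hr x hx
    simpa using hcomb r 0 hr le_rfl x hx x hx
  have Padd : ∀ x ∈ P, ∀ y ∈ P, x + y ∈ P := by
    intro x hx y hy
    simpa using hcomb 1 1 zero_le_one zero_le_one x hx y hy
  have hdP : ∀ x y : M, d x y ∈ P := by
    intro x y; simpa [coneLe] using hd0 x y
  have hb1' : 0 < 1 - b := by linarith
  have hc1' : 0 < 1 - c := by linarith
  set δ := max a (max (b / (1 - b)) (c / (1 - c))) with hδdef
  have haδ : a ≤ δ := le_max_left _ _
  have hbδ : b / (1 - b) ≤ δ := le_trans (le_max_left _ _) (le_max_right _ _)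
  have hcδ : c / (1 - c) ≤ δ := le_trans (le_max_right _ _) (le_max_right _ _)
  have hδ0 : 0 ≤ δ := le_trans ha0 haδ
  have hδ1 : δ < 1 := by
    refine max_lt ha1 (max_lt ?_ ?_)
    · rw [div_lt_one hb1']; linarith
    · rw [div_lt_one hc1']; linarith
  refine ⟨δ, hδ0, hδ1, fun x y => ?_⟩
  set u := d (T (S x)) (T (S y)) with hu
  set d1 := d (T x) (T y) with hd1
  set d2 := d (T x) (T (S y)) with hd2
  have key : ∃ t : ℝ, 0 ≤ t ∧ t ≤ δ ∧ (t • d1 + (2 * t) • d2) - u ∈ P := by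
    rcases hZ x y with h | h | h
    · refine ⟨a, ha0, haδ, ?_⟩
      have h' : a • d1 - u ∈ P := h
      have h2 : (2 * a) • d2 ∈ P := Psmul _ (by linarith) _ (hdP _ _)
      have := Padd _ h' _ h2
      convert this using 1
      module
    · refine ⟨b / (1 - b), div_nonneg hb0 hb1'.le, hbδ, ?_⟩
      have h' : b • (d (T x) (T (S x)) + d (T y) (T (S y))) - u ∈ P := h
      have t1 : d (T x) (T (S y)) + d (T (S y)) (T (S x)) - d (T x) (T (S x)) ∈ P :=
        htri (T x) (T (S x)) (T (S y))
      rw [hsymm (T (S y)) (T (S x))] at t1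
      have t2 : d (T y) (T x) + d (T x) (T (S y)) - d (T y) (T (S y)) ∈ P :=
        htri (T y) (T (S y)) (T x)
      rw [hsymm (T y) (T x)] at t2
      have hs : b • ((d2 + u - d (T x) (T (S x))) + (d1 + d2 - d (T y) (T (S y)))) ∈ P :=
        Psmul b hb0 _ (Padd _ t1 _ t2)
      have hsum := Padd _ hs _ h'
      have hfin := Psmul (1 / (1 - b)) (by positivity) _ hsum
      convert hfin using 1
      match_scalars <;> field_simp <;> ring
    · refine ⟨c / (1 - c), div_nonneg hc0 hc1'.le, hcδ, ?_⟩
      have h' : c • (d (T x) (T (S y)) + d (T y) (T (S x))) - u ∈ P := h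
      have t1 : d (T x) (T (S y)) + d (T (S y)) (T (S x)) - d (T x) (T (S x)) ∈ P :=
        htri (T x) (T (S x)) (T (S y))
      rw [hsymm (T (S y)) (T (S x))] at t1
      have t3 : d (T y) (T x) + d (T x) (T (S x)) - d (T y) (T (S x)) ∈ P :=
        htri (T y) (T (S x)) (T x)
      rw [hsymm (T y) (T x)] at t3
      have hs : c • ((d2 + u - d (T x) (T (S x))) + (d1 + d (T x) (T (S x)) - d (T y) (T (S x)))) ∈ P :=
        Psmul c hc0 _ (Padd _ t1 _ t3)
      have hsum := Padd _ hs _ h'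
      have hfin := Psmul (1 / (1 - c)) (by positivity) _ hsum
      convert hfin using 1
      match_scalars <;> field_simp <;> ring
  obtain ⟨t, ht0, htδ, hkey⟩ := key
  show (δ • d1 + (2 * δ) • d2) - u ∈ P
  have hpad : (δ - t) • d1 + (2 * (δ - t)) • d2 ∈ P :=
    hcomb (δ - t) (2 * (δ - t)) (by linarith) (by linarith) _ (hdP _ _) _ (hdP _ _)
  have := Padd _ hpad _ hkey
  convert this using 1
  module
end

section
/- Let (M,d) be a cone metric space over a normal cone P with normal constant K, and let T,S : M → M with S a T-Zamfirescu mapping. Then for every x₀ ∈ M, lim_{n→∞} d(TSⁿx₀, TSⁿ⁺¹x₀) = 0 (convergence in the norm of E). -/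
open Filter Topology

variable {E : Type*}

section Aux

variable [NormedAddCommGroup E] [NormedSpace ℝ E] {P : Set E}

lemma cone_zero_mem (hP : IsCone P) : (0 : E) ∈ P := by
  obtain ⟨x, hx⟩ := hP.2.1
  have := hP.2.2.2.1 0 0 le_rfl le_rfl x hx x hx
  simpa using this

lemma cone_smul_mem (hP : IsCone P) {t : ℝ} (ht : 0 ≤ t) {x : E} (hx : x ∈ P) :
    t • x ∈ P := by
  have := hP.2.2.2.1 t 0 ht le_rfl x hx x hx
  simpa using this

lemma cone_add_mem (hP : IsCone P) {x y : E} (hx : x ∈ P) (hy : y ∈ P) :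
    x + y ∈ P := by
  have := hP.2.2.2.1 1 1 zero_le_one zero_le_one x hx y hy
  simpa using this

lemma coneLe_trans (hP : IsCone P) {x y z : E} (h1 : coneLe P x y) (h2 : coneLe P y z) :
    coneLe P x z := by
  have := cone_add_mem hP h2 h1
  simpa [coneLe] using this

lemma coneLe_smul (hP : IsCone P) {t : ℝ} (ht : 0 ≤ t) {x y : E} (h : coneLe P x y) :
    coneLe P (t • x) (t • y) := by
  have := cone_smul_mem hP ht h
  simpa [coneLe, smul_sub] using this

lemma coneLe_add (hP : IsCone P) {x y x' y' : E} (h : coneLe P x y) (h' : coneLe P x' y') :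
    coneLe P (x + x') (y + y') := by
  have := cone_add_mem hP h h'
  simpa [coneLe, sub_add_eq_sub_sub, add_sub_assoc] using (by
    convert cone_add_mem hP h h' using 1
    abel)

/-- If `v ≤ t • (u + v)` with `0 ≤ t < 1` then `v ≤ (t/(1-t)) • u`. -/
lemma cone_frac_trick (hP : IsCone P) {t : ℝ} (ht0 : 0 ≤ t) (ht1 : t < 1)
    {u v : E} (h : coneLe P v (t • (u + v))) :
    coneLe P v ((t / (1 - t)) • u) := by
  have h1t : (0:ℝ) < 1 - t := by linarith
  have hs : (0:ℝ) ≤ (1 - t)⁻¹ := le_of_lt (inv_pos.2 h1t)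
  have hmem : t • (u + v) - v ∈ P := h
  have := cone_smul_mem hP hs hmem
  have key : (1 - t)⁻¹ • (t • (u + v) - v) = (t / (1 - t)) • u - v := by
    have hne : (1 - t) ≠ 0 := ne_of_gt h1t
    match_scalars <;> field_simp <;> ring
  rw [key] at this
  exact this

end Aux

theorem tz_iterates_dist_tendsto_zero {E M : Type*} [NormedAddCommGroup E]
    [NormedSpace ℝ E] [CompleteSpace E] (P : Set E) (K : ℝ) (hP : IsCone P)
    (hK : IsNormalCone P K) (d : M → M → E) (hd : IsConeMetric P d)
    (T S : M → M) (hTZ : TZamfirescu P d T S) :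
    ∀ x₀ : M,
      Filter.Tendsto (fun n : ℕ => d (T (S^[n] x₀)) (T (S^[n + 1] x₀)))
        Filter.atTop (nhds 0) := by
  intro x₀
  obtain ⟨a, b, c, ha0, ha1, hb0, hb1, hc0, hc1, hZ⟩ := hTZ
  obtain ⟨hpos, hsym, hcomm, htri⟩ := hd
  set δ : ℝ := max a (max (b / (1 - b)) (c / (1 - c))) with hδdef
  have hb1' : (0:ℝ) < 1 - b := by linarith
  have hc1' : (0:ℝ) < 1 - c := by linarith
  have hδ0 : 0 ≤ δ := le_trans ha0 (le_max_left _ _)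
  have hδ1 : δ < 1 := by
    have h1 : b / (1 - b) < 1 := (div_lt_one hb1').2 (by linarith)
    have h2 : c / (1 - c) < 1 := (div_lt_one hc1').2 (by linarith)
    exact max_lt ha1 (max_lt h1 h2)
  -- key contraction step
  have key : ∀ x : M,
      coneLe P (d (T (S x)) (T (S (S x)))) (δ • d (T x) (T (S x))) := by
    intro x
    set u := d (T x) (T (S x)) with hu
    set v := d (T (S x)) (T (S (S x))) with hv
    have hu0 : u ∈ P := by have := hpos (T x) (T (S x)); simpa [coneLe] using this
    have step : ∀ t : ℝ, t ≤ δ → coneLe P v (t • u) → coneLe P v (δ • u) := by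
      intro t htδ h
      refine coneLe_trans hP h ?_
      have : (δ - t) • u ∈ P := cone_smul_mem hP (by linarith) hu0
      simpa [coneLe, sub_smul] using this
    rcases hZ x (S x) with h | h | h
    · exact step a (le_max_left _ _) h
    · have h' : coneLe P v (b • (u + v)) := h
      exact step (b / (1 - b)) (le_trans (le_max_left _ _) (le_max_right _ _))
        (cone_frac_trick hP hb0 (by linarith) h')
    · -- h : v ≤ c • (d (T x) (T (S (S x))) + d (T (S x)) (T (S x)))
      have hzero : d (T (S x)) (T (S x)) = 0 := (hsym _ _).2 rfl
      have htri' : coneLe P (d (T x) (T (S (S x)))) (u + v) := htri _ _ _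
      have h2 : coneLe P (c • (d (T x) (T (S (S x))) + d (T (S x)) (T (S x))))
          (c • (u + v)) := by
        rw [hzero, add_zero]
        exact coneLe_smul hP hc0 htri'
      have h' : coneLe P v (c • (u + v)) := coneLe_trans hP h h2
      exact step (c / (1 - c)) (le_trans (le_max_right _ _) (le_max_right _ _))
        (cone_frac_trick hP hc0 (by linarith) h')
  set dn : ℕ → E := fun n => d (T (S^[n] x₀)) (T (S^[n + 1] x₀)) with hdn
  have hdn0 : ∀ n, dn n ∈ P := by
    intro n; have := hpos (T (S^[n] x₀)) (T (S^[n+1] x₀)); simpa [coneLe, hdn] using this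
  have hrec : ∀ n, coneLe P (dn (n + 1)) (δ • dn n) := by
    intro n
    have := key (S^[n] x₀)
    simpa [hdn, Function.iterate_succ_apply'] using this
  have hbound : ∀ n, coneLe P (dn n) (δ ^ n • dn 0) := by
    intro n
    induction n with
    | zero => simpa [coneLe] using cone_zero_mem hP
    | succ n ih =>
        refine coneLe_trans hP (hrec n) ?_
        have := coneLe_smul hP hδ0 ih
        rw [smul_smul, ← pow_succ'] at this
        exact this
  have hnorm : ∀ n, ‖dn n‖ ≤ (K * ‖dn 0‖) * δ ^ n := by
    intro n
    have := hK.2 (dn n) (δ ^ n • dn 0) (by simpa [coneLe] using hdn0 n) (hbound n)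
    calc ‖dn n‖ ≤ K * ‖δ ^ n • dn 0‖ := this
      _ = (K * ‖dn 0‖) * δ ^ n := by
          rw [norm_smul, Real.norm_eq_abs, abs_of_nonneg (pow_nonneg hδ0 n)]; ring
  rw [tendsto_zero_iff_norm_tendsto_zero]
  refine squeeze_zero (fun n => norm_nonneg _) hnorm ?_
  have : Filter.Tendsto (fun n : ℕ => δ ^ n) Filter.atTop (nhds 0) :=
    tendsto_pow_atTop_nhds_zero_of_lt_one hδ0 hδ1
  simpa using this.const_mul (K * ‖dn 0‖)
end

section
/- In a cone metric space, if S is a T-Kannan contraction (there exists b ∈ [0,1/2) with d(TSx,TSy) ≤ b[d(Tx,TSx)+d(Ty,TSy)] for all x,y), then S is a T-weak contraction: there exist δ ∈ (0,1) and L ≥ 0 with d(TSx,TSy) ≤ δ·d(Tx,Ty) + L·d(Ty,TSx) for all x,y ∈ M. -/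
open Filter Topology

variable {E : Type*}

theorem tk_implies_tweak {E M : Type*} [NormedAddCommGroup E]
    [NormedSpace ℝ E] [CompleteSpace E] (P : Set E) (hP : IsCone P)
    (d : M → M → E) (hd : IsConeMetric P d) (T S : M → M)
    (hTK : ∃ b : ℝ, 0 ≤ b ∧ b < 1/2 ∧
      ∀ x y : M, coneLe P (d (T (S x)) (T (S y)))
        (b • (d (T x) (T (S x)) + d (T y) (T (S y))))) :
    TWeakContraction P d T S := by
  obtain ⟨hclosed, hne, hne0, hcomb, hpointed⟩ := hP
  have hsmul : ∀ (a : ℝ), 0 ≤ a → ∀ x ∈ P, a • x ∈ P := by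
    intro a ha x hx
    have := hcomb a 0 ha le_rfl x hx x hx
    simpa using this
  have hadd : ∀ x ∈ P, ∀ y ∈ P, x + y ∈ P := by
    intro x hx y hy
    have := hcomb 1 1 zero_le_one zero_le_one x hx y hy
    simpa using this
  obtain ⟨b, hb0, hb2, hK⟩ := hTK
  set b' : ℝ := max b (1/4) with hb'def
  have hb'0 : 0 < b' := lt_of_lt_of_le (by norm_num) (le_max_right _ _)
  have hb'2 : b' < 1/2 := max_lt hb2 (by norm_num)
  have hbb' : b ≤ b' := le_max_left _ _
  have h1b : (0:ℝ) < 1 - b' := by linarith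
  refine ⟨b' / (1 - b'), 2 * b' / (1 - b'), by positivity, ?_, by positivity, ?_⟩
  · rw [div_lt_one h1b]; linarith
  intro x y
  obtain ⟨hdpos, hdeq, hdsymm, hdtri⟩ := hd
  -- step 1: Kannan with b'
  have h1 : coneLe P (d (T (S x)) (T (S y)))
      (b' • (d (T x) (T (S x)) + d (T y) (T (S y)))) := by
    have hK' := hK x y
    unfold coneLe at hK' ⊢
    have hmem : (b' - b) • (d (T x) (T (S x)) + d (T y) (T (S y))) ∈ P := by
      refine hsmul _ (by linarith) _ (hadd _ ?_ _ ?_)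
      · simpa [coneLe] using hdpos (T x) (T (S x))
      · simpa [coneLe] using hdpos (T y) (T (S y))
    have := hadd _ hmem _ hK'
    convert this using 1
    module
  -- step 2: triangle inequalities
  have t1 : coneLe P (d (T x) (T (S x))) (d (T x) (T y) + d (T y) (T (S x))) :=
    hdtri (T x) (T (S x)) (T y)
  have t2 : coneLe P (d (T y) (T (S y))) (d (T y) (T (S x)) + d (T (S x)) (T (S y))) :=
    hdtri (T y) (T (S y)) (T (S x))
  set z := d (T (S x)) (T (S y))
  set u := d (T x) (T y)
  set v := d (T y) (T (S x))
  -- combine: z ≤ b'•u + (2b')•v + b'•z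
  have h2 : coneLe P z (b' • u + (2 * b') • v + b' • z) := by
    unfold coneLe at h1 t1 t2 ⊢
    have hsum : b' • ((d (T x) (T y) + d (T y) (T (S x)) - d (T x) (T (S x))) +
        (d (T y) (T (S x)) + d (T (S x)) (T (S y)) - d (T y) (T (S y)))) ∈ P :=
      hsmul _ (le_of_lt hb'0) _ (hadd _ t1 _ t2)
    have := hadd _ hsum _ h1
    convert this using 1
    simp only [z, u, v]
    module
  -- solve for z
  unfold coneLe at h2 ⊢
  have key : (b' / (1 - b')) • u + (2 * b' / (1 - b')) • v - z
      = (1 / (1 - b')) • (b' • u + (2 * b') • v + b' • z - z) := by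
    have hne' : (1:ℝ) - b' ≠ 0 := ne_of_gt h1b
    match_scalars <;> field_simp <;> ring
  rw [key]
  exact hsmul _ (by positivity) _ h2
end

section
/- In a cone metric space, if S is a T-Chatterjea contraction (there exists c ∈ [0,1/2) with d(TSx,TSy) ≤ c[d(Tx,TSy)+d(Ty,TSx)] for all x,y), then S is a T-weak contraction: there exist δ ∈ (0,1) and L ≥ 0 with d(TSx,TSy) ≤ δ·d(Tx,Ty) + L·d(Ty,TSx) for all x,y ∈ M. -/
open Filter Topology

variable {E : Type*}

theorem tc_implies_tweak {E M : Type*} [NormedAddCommGroup E]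
    [NormedSpace ℝ E] [CompleteSpace E] (P : Set E) (hP : IsCone P)
    (d : M → M → E) (hd : IsConeMetric P d) (T S : M → M)
    (hTC : ∃ c : ℝ, 0 ≤ c ∧ c < 1/2 ∧
      ∀ x y : M, coneLe P (d (T (S x)) (T (S y)))
        (c • (d (T x) (T (S y)) + d (T y) (T (S x))))) :
    TWeakContraction P d T S := by
  obtain ⟨c, hc0, hc2, hC⟩ := hTC
  have hcomb := hP.2.2.2.1
  obtain ⟨c', hc'c, hc'0, hc'2⟩ : ∃ c' : ℝ, c ≤ c' ∧ 0 < c' ∧ c' < 1/2 :=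
    ⟨max c (1/4), le_max_left _ _,
      lt_of_lt_of_le (by norm_num) (le_max_right _ _), max_lt hc2 (by norm_num)⟩
  have h1c : (0:ℝ) < 1 - c' := by linarith
  obtain ⟨t, ht0, htc⟩ : ∃ t : ℝ, 0 < t ∧ t * (1 - c') = 1 :=
    ⟨1/(1-c'), by positivity, by field_simp⟩
  refine ⟨t * c', t * (2*c'), by positivity, ?_, by positivity, ?_⟩
  · nlinarith [mul_pos ht0 (show (0:ℝ) < 1 - 2*c' by linarith)]
  · intro x y
    set A := d (T x) (T y) with hA'
    set B := d (T y) (T (S x)) with hB'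
    set D := d (T (S x)) (T (S y)) with hD'
    set X := d (T x) (T (S y)) with hX'
    have hp1 : c • (X + B) - D ∈ P := hC x y
    have htri1 : (A + d (T y) (T (S y))) - X ∈ P := hd.2.2.2 (T x) (T (S y)) (T y)
    have htri2 : (B + D) - d (T y) (T (S y)) ∈ P := hd.2.2.2 (T y) (T (S y)) (T (S x))
    have hp2 : A + B + D - X ∈ P := by
      have h := hcomb 1 1 zero_le_one zero_le_one _ htri1 _ htri2
      have e : (1:ℝ) • (A + d (T y) (T (S y)) - X) + (1:ℝ) • (B + D - d (T y) (T (S y)))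
          = A + B + D - X := by module
      rwa [e] at h
    have hA : A ∈ P := by simpa [coneLe] using hd.1 (T x) (T y)
    have hB : B ∈ P := by simpa [coneLe] using hd.1 (T y) (T (S x))
    have hD : D ∈ P := by simpa [coneLe] using hd.1 (T (S x)) (T (S y))
    have hp3 : A + (2:ℝ) • B + D ∈ P := by
      have h1 := hcomb 1 2 zero_le_one (by norm_num) _ hA _ hB
      have h2 := hcomb 1 1 zero_le_one zero_le_one _ h1 _ hD
      have e : (1:ℝ) • ((1:ℝ) • A + (2:ℝ) • B) + (1:ℝ) • D = A + (2:ℝ) • B + D := by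
        module
      rwa [e] at h2
    have hq : c • (A + B + D - X) + (c' - c) • (A + (2:ℝ) • B + D) ∈ P :=
      hcomb c (c' - c) hc0 (by linarith) _ hp2 _ hp3
    have hq2 : (1:ℝ) • (c • (X + B) - D)
        + (1:ℝ) • (c • (A + B + D - X) + (c' - c) • (A + (2:ℝ) • B + D)) ∈ P :=
      hcomb 1 1 zero_le_one zero_le_one _ hp1 _ hq
    have hq3 := hcomb t 0 ht0.le le_rfl _ hq2 _ hq2
    rw [zero_smul, add_zero] at hq3
    show (t * c') • A + (t * (2*c')) • B - D ∈ P
    have heq : (t * c') • A + (t * (2*c')) • B - D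
        = t • ((1:ℝ) • (c • (X + B) - D)
          + (1:ℝ) • (c • (A + B + D - X) + (c' - c) • (A + (2:ℝ) • B + D))) := by
      match_scalars <;> (first | ring1 | linear_combination htc | linear_combination (2:ℝ) * htc | linear_combination -htc | linear_combination (-2:ℝ) * htc)
    rw [heq]; exact hq3
end

section
/- In a cone metric space, if S is a T-Zamfirescu mapping, then S is a T-weak contraction: there exist δ ∈ (0,1) and L ≥ 0 such that d(TSx,TSy) ≤ δ·d(Tx,Ty) + L·d(Ty,TSx) for all x,y ∈ M. -/
open Filter Topology

variable {E : Type*}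

theorem tz_implies_tweak {E M : Type*} [NormedAddCommGroup E]
    [NormedSpace ℝ E] [CompleteSpace E] (P : Set E) (hP : IsCone P)
    (d : M → M → E) (hd : IsConeMetric P d) (T S : M → M)
    (hTZ : TZamfirescu P d T S) :
    TWeakContraction P d T S := by
  obtain ⟨a, b, c, ha0, ha1, hb0, hb1, hc0, hc1, h⟩ := hTZ
  obtain ⟨-, ⟨z0, hz0⟩, -, hcomb, -⟩ := hP
  obtain ⟨hnn, -, -, htri⟩ := hd
  have hadd : ∀ x ∈ P, ∀ y ∈ P, x + y ∈ P := by
    intro x hx y hy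
    simpa using hcomb 1 1 zero_le_one zero_le_one x hx y hy
  have hsmul : ∀ t : ℝ, 0 ≤ t → ∀ x ∈ P, t • x ∈ P := by
    intro t ht x hx
    simpa using hcomb t 0 ht le_rfl x hx x hx
  have h0P : (0 : E) ∈ P := by
    simpa using hcomb 0 0 le_rfl le_rfl z0 hz0 z0 hz0
  have hrefl : ∀ x : E, coneLe P x x := by
    intro x; simp [coneLe, h0P]
  have htrans : ∀ x y z : E, coneLe P x y → coneLe P y z → coneLe P x z := by
    intro x y z h1 h2
    have := hadd _ h2 _ h1
    simpa [coneLe, sub_add_sub_cancel] using this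
  have hleadd : ∀ x y x' y' : E, coneLe P x y → coneLe P x' y' →
      coneLe P (x + x') (y + y') := by
    intro x y x' y' h1 h2
    have h3 := hadd _ h1 _ h2
    have hEq : y - x + (y' - x') = (y + y') - (x + x') := by abel
    rwa [hEq] at h3
  have hlesmul : ∀ t : ℝ, 0 ≤ t → ∀ x y : E, coneLe P x y → coneLe P (t • x) (t • y) := by
    intro t ht x y h1
    have := hsmul t ht _ h1
    rwa [smul_sub] at this
  have main : ∀ k : ℝ, 0 ≤ k → k < 1/2 → ∀ u D e : E,
      coneLe P u (k • (D + (e + (e + u)))) →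
      coneLe P u ((k / (1 - k)) • D + (2 * k / (1 - k)) • e) := by
    intro k hk0 hk u D e hu
    have hk1 : (0 : ℝ) < 1 - k := by linarith
    have h1 : coneLe P ((1 - k) • u) (k • D + (2 * k) • e) := by
      show (k • D + (2 * k) • e) - (1 - k) • u ∈ P
      have hEq : (k • D + (2 * k) • e) - (1 - k) • u = k • (D + (e + (e + u))) - u := by
        module
      rw [hEq]; exact hu
    have h2 := hlesmul (1 / (1 - k)) (by positivity) _ _ h1
    have hEq2 : (1 / (1 - k)) • ((1 - k) • u) = u := by
      rw [smul_smul]; rw [show (1 / (1 - k)) * (1 - k) = 1 by field_simp, one_smul]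
    have hEq3 : (1 / (1 - k)) • (k • D + (2 * k) • e)
        = (k / (1 - k)) • D + (2 * k / (1 - k)) • e := by
      rw [smul_add, smul_smul, smul_smul,
        show (1 / (1 - k)) * k = k / (1 - k) by ring,
        show (1 / (1 - k)) * (2 * k) = 2 * k / (1 - k) by ring]
    rw [hEq2, hEq3] at h2
    exact h2
  set δ₀ : ℝ := max a (max (b / (1 - b)) (c / (1 - c))) with hδ₀def
  set δ : ℝ := max δ₀ (1 / 2) with hδdef
  have hb1' : (0 : ℝ) < 1 - b := by linarith
  have hc1' : (0 : ℝ) < 1 - c := by linarith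
  have hbδ : b / (1 - b) ≤ δ := le_trans (le_trans (le_max_left _ _) (le_max_right _ _)) (le_max_left _ _)
  have hcδ : c / (1 - c) ≤ δ := le_trans (le_trans (le_max_right _ _) (le_max_right _ _)) (le_max_left _ _)
  have haδ : a ≤ δ := le_trans (le_max_left _ _) (le_max_left _ _)
  have hδpos : (0 : ℝ) < δ := lt_of_lt_of_le (by norm_num) (le_max_right _ _)
  have hδ1 : δ < 1 := by
    apply max_lt _ (by norm_num)
    apply max_lt ha1
    apply max_lt
    · rw [div_lt_one hb1']; linarith
    · rw [div_lt_one hc1']; linarith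
  refine ⟨δ, 2 * δ, hδpos, hδ1, by linarith, ?_⟩
  have key : ∀ (t s : ℝ) (u D e : E), t ≤ δ → s ≤ 2 * δ → D ∈ P → e ∈ P →
      coneLe P u (t • D + s • e) → coneLe P u (δ • D + (2 * δ) • e) := by
    intro t s u D e ht hs hD he hu
    refine htrans _ _ _ hu ?_
    show (δ • D + (2 * δ) • e) - (t • D + s • e) ∈ P
    have hEq : (δ • D + (2 * δ) • e) - (t • D + s • e) = (δ - t) • D + ((2 * δ) - s) • e := by
      module
    rw [hEq]
    exact hadd _ (hsmul _ (by linarith) _ hD) _ (hsmul _ (by linarith) _ he)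
  intro x y
  set u := d (T (S x)) (T (S y)) with hu
  set D := d (T x) (T y) with hD
  set e := d (T y) (T (S x)) with he
  have hDP : D ∈ P := by simpa [coneLe] using hnn (T x) (T y)
  have heP : e ∈ P := by simpa [coneLe] using hnn (T y) (T (S x))
  have hq : coneLe P (d (T y) (T (S y))) (e + u) := htri (T y) (T (S y)) (T (S x))
  rcases h x y with h1 | h2 | h3
  · refine key a 0 u D e haδ (by linarith) hDP heP ?_
    simpa using h1
  · have hp : coneLe P (d (T x) (T (S x))) (D + e) := htri (T x) (T (S x)) (T y)
    have hsum : coneLe P (d (T x) (T (S x)) + d (T y) (T (S y))) ((D + e) + (e + u)) :=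
      hleadd _ _ _ _ hp hq
    have hEq : (D + e) + (e + u) = D + (e + (e + u)) := by abel
    rw [hEq] at hsum
    have h2' : coneLe P u (b • (D + (e + (e + u)))) :=
      htrans _ _ _ h2 (hlesmul b hb0 _ _ hsum)
    have := main b hb0 hb1 u D e h2'
    exact key _ _ u D e hbδ (by rw [mul_div_assoc] at *; linarith) hDP heP this
  · have hr : coneLe P (d (T x) (T (S y))) (D + d (T y) (T (S y))) :=
      htri (T x) (T (S y)) (T y)
    have hr2 : coneLe P (d (T x) (T (S y))) (D + (e + u)) :=
      htrans _ _ _ hr (hleadd _ _ _ _ (hrefl D) hq)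
    have hsum : coneLe P (d (T x) (T (S y)) + d (T y) (T (S x))) ((D + (e + u)) + e) :=
      hleadd _ _ _ _ hr2 (hrefl e)
    have hEq : (D + (e + u)) + e = D + (e + (e + u)) := by abel
    rw [hEq] at hsum
    have h3' : coneLe P u (c • (D + (e + (e + u)))) :=
      htrans _ _ _ h3 (hlesmul c hc0 _ _ hsum)
    have := main c hc0 hc1 u D e h3'
    exact key _ _ u D e hcδ (by rw [mul_div_assoc] at *; linarith) hDP heP this
end

section
/- Let (M,d) be a complete cone metric space over a normal cone, T : M → M continuous and injective, and S : M → M a continuous T-weak contraction. Then for every x₀ ∈ M, lim_{n→∞} d(TSⁿx₀, TSⁿ⁺¹x₀) = 0, and the sequence (TSⁿx₀) converges to some y₀ ∈ M. -/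
open Filter Topology

variable {E : Type*}

theorem tweak_iterates {E M : Type*} [NormedAddCommGroup E]
    [NormedSpace ℝ E] [CompleteSpace E] (P : Set E) (K : ℝ) (hP : IsCone P)
    (hK : IsNormalCone P K) (d : M → M → E) (hd : IsConeMetric P d)
    (hcomp : ConeComplete P d) (T S : M → M)
    (hTc : ConeContinuous P d T) (hTinj : Function.Injective T)
    (hSc : ConeContinuous P d S) (hTW : TWeakContraction P d T S) :
    ∀ x₀ : M,
      Filter.Tendsto (fun n : ℕ => d (T (S^[n] x₀)) (T (S^[n + 1] x₀)))
        Filter.atTop (nhds 0) ∧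
      ∃ y₀ : M, ConeConverges P d (fun n => T (S^[n] x₀)) y₀ := by
  intro x₀
  obtain ⟨hPclosed, hPne, -, hPadd, -⟩ := hP
  obtain ⟨hKpos, hKnorm⟩ := hK
  obtain ⟨hd0, hdeq, hdsym, hdtri⟩ := hd
  obtain ⟨δ, L, hδ0, hδ1, hL0, hcon⟩ := hTW
  have Padd : ∀ x ∈ P, ∀ y ∈ P, x + y ∈ P := fun x hx y hy => by
    simpa using hPadd 1 1 zero_le_one zero_le_one x hx y hy
  have Psmul : ∀ a : ℝ, 0 ≤ a → ∀ x ∈ P, a • x ∈ P := fun a ha x hx => by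
    simpa using hPadd a 0 ha le_rfl x hx x hx
  have P0 : (0 : E) ∈ P := by
    obtain ⟨p, hp⟩ := hPne
    simpa using Psmul 0 le_rfl p hp
  have ctrans : ∀ {x y z : E}, coneLe P x y → coneLe P y z → coneLe P x z := by
    intro x y z hxy hyz
    have := Padd _ hyz _ hxy
    simpa [coneLe, sub_add_sub_cancel] using this
  have caddle : ∀ {a b a' b' : E}, coneLe P a b → coneLe P a' b' →
      coneLe P (a + a') (b + b') := by
    intro a b a' b' h1 h2
    have := Padd _ h1 _ h2
    have e : b - a + (b' - a') = b + b' - (a + a') := by abel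
    rwa [e] at this
  set u : ℕ → E := fun n => d (T (S^[n] x₀)) (T (S^[n + 1] x₀)) with hu
  set v : ℕ → M := fun n => T (S^[n] x₀) with hv
  have hstep : ∀ n, coneLe P (u (n + 1)) (δ • u n) := by
    intro n
    have h := hcon (S^[n] x₀) (S^[n + 1] x₀)
    rw [← Function.iterate_succ_apply' S n x₀, ← Function.iterate_succ_apply' S (n + 1) x₀,
      (hdeq _ _).mpr rfl, smul_zero, add_zero] at h
    exact h
  have hiter : ∀ n, coneLe P (u n) (δ ^ n • u 0) := by
    intro n
    induction n with
    | zero => simpa [coneLe] using P0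
    | succ n ih =>
      refine ctrans (hstep n) ?_
      have : δ • (δ ^ n • u 0) - δ • u n ∈ P := by
        rw [← smul_sub]
        exact Psmul δ hδ0.le _ ih
      rwa [smul_smul, ← pow_succ'] at this
  have hu0 : ∀ n, coneLe P 0 (u n) := fun n => hd0 _ _
  have hnormu : ∀ n, ‖u n‖ ≤ K * δ ^ n * ‖u 0‖ := by
    intro n
    have := hKnorm (u n) (δ ^ n • u 0) (hu0 n) (hiter n)
    calc ‖u n‖ ≤ K * ‖δ ^ n • u 0‖ := this
      _ = K * δ ^ n * ‖u 0‖ := by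
          rw [norm_smul, Real.norm_eq_abs, abs_of_nonneg (pow_nonneg hδ0.le n)]
          ring
  have htend0 : Filter.Tendsto (fun n : ℕ => K * δ ^ n * ‖u 0‖) Filter.atTop (nhds 0) := by
    have h1 : Filter.Tendsto (fun n : ℕ => δ ^ n) Filter.atTop (nhds 0) :=
      tendsto_pow_atTop_nhds_zero_of_lt_one hδ0.le hδ1
    have := (h1.const_mul K).mul_const ‖u 0‖
    simpa using this
  have htendu : Filter.Tendsto u Filter.atTop (nhds 0) := by
    rw [tendsto_zero_iff_norm_tendsto_zero]
    exact squeeze_zero (fun n => norm_nonneg _) hnormu htend0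
  refine ⟨htendu, ?_⟩
  -- Cauchy estimate
  have hchain : ∀ n k, coneLe P (d (v n) (v (n + k)))
      ((∑ i ∈ Finset.Ico n (n + k), δ ^ i) • u 0) := by
    intro n k
    induction k with
    | zero =>
      simp only [Nat.add_zero, Finset.Ico_self, Finset.sum_empty, zero_smul]
      have : d (v n) (v n) = 0 := (hdeq _ _).mpr rfl
      rw [this]
      simpa [coneLe] using P0
    | succ k ih =>
      have htri : coneLe P (d (v n) (v (n + (k + 1))))
          (d (v n) (v (n + k)) + d (v (n + k)) (v (n + k + 1))) := by
        have := hdtri (v n) (v (n + (k + 1))) (v (n + k))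
        rwa [show n + (k + 1) = n + k + 1 from rfl] at this
      have h2 : coneLe P (d (v (n + k)) (v (n + k + 1))) (δ ^ (n + k) • u 0) := hiter (n + k)
      refine ctrans htri (ctrans (caddle ih h2) ?_)
      rw [Nat.add_succ, Finset.sum_Ico_succ_top (Nat.le_add_right n k), add_smul]
      simpa [coneLe] using P0
  have hcoef : ∀ n k, coneLe P (d (v n) (v (n + k))) ((δ ^ n / (1 - δ)) • u 0) := by
    intro n k
    refine ctrans (hchain n k) ?_
    have hle : (∑ i ∈ Finset.Ico n (n + k), δ ^ i) ≤ δ ^ n / (1 - δ) :=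
      geom_sum_Ico_le_of_lt_one hδ0.le hδ1
    have : (δ ^ n / (1 - δ) - ∑ i ∈ Finset.Ico n (n + k), δ ^ i) • u 0 ∈ P :=
      Psmul _ (by linarith) _ (by simpa [coneLe, hu] using hd0 (T x₀) (T (S^[1] x₀)))
    rwa [sub_smul] at this
  have hnormd : ∀ n m, n ≤ m → ‖d (v n) (v m)‖ ≤ K * (δ ^ n / (1 - δ)) * ‖u 0‖ := by
    intro n m hnm
    obtain ⟨k, rfl⟩ := Nat.exists_eq_add_of_le hnm
    have := hKnorm _ _ (hd0 (v n) (v (n + k))) (hcoef n k)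
    calc ‖d (v n) (v (n + k))‖ ≤ K * ‖(δ ^ n / (1 - δ)) • u 0‖ := this
      _ = K * (δ ^ n / (1 - δ)) * ‖u 0‖ := by
          rw [norm_smul, Real.norm_eq_abs,
            abs_of_nonneg (div_nonneg (pow_nonneg hδ0.le n) (by linarith))]
          ring
  have hcauchy : ConeCauchy P d v := by
    intro c hc
    have hc' : c ∈ interior P := by simpa [coneLt] using hc
    obtain ⟨ε, hε, hball⟩ := Metric.mem_nhds_iff.mp (mem_interior_iff_mem_nhds.mp hc')
    have hsmall : ∀ w : E, w ∈ P → ‖w‖ < ε → c - w ∈ interior P := by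
      intro w hw hwn
      rw [mem_interior_iff_mem_nhds, Metric.mem_nhds_iff]
      refine ⟨ε - ‖w‖, by linarith, fun z hz => ?_⟩
      apply hball
      rw [Metric.mem_ball] at hz ⊢
      calc dist z c = ‖z - c‖ := by rw [dist_eq_norm]
        _ = ‖(z - (c - w)) + (-w)‖ := by congr 1; abel
        _ ≤ ‖z - (c - w)‖ + ‖w‖ := by
            simpa using norm_add_le (z - (c - w)) (-w)
        _ < ε := by
            have : ‖z - (c - w)‖ < ε - ‖w‖ := by rwa [dist_eq_norm] at hz
            linarith
    have hbound : Filter.Tendsto (fun n : ℕ => K * (δ ^ n / (1 - δ)) * ‖u 0‖)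
        Filter.atTop (nhds 0) := by
      have h1 : Filter.Tendsto (fun n : ℕ => δ ^ n) Filter.atTop (nhds 0) :=
        tendsto_pow_atTop_nhds_zero_of_lt_one hδ0.le hδ1
      have := ((h1.const_mul K).mul_const ((1 - δ)⁻¹ * ‖u 0‖))
      simpa [div_eq_mul_inv, mul_assoc, mul_comm, mul_left_comm] using this
    obtain ⟨n₀, hn₀⟩ := (Metric.tendsto_atTop.mp hbound) ε hε
    refine ⟨n₀, fun n hn m hm => ?_⟩
    have key : ∀ a b : ℕ, a ≥ n₀ → a ≤ b → coneLt P (d (v a) (v b)) c := by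
      intro a b ha hab
      have h1 : ‖d (v a) (v b)‖ ≤ K * (δ ^ a / (1 - δ)) * ‖u 0‖ := hnormd a b hab
      have h2 : K * (δ ^ a / (1 - δ)) * ‖u 0‖ < ε := by
        have := hn₀ a ha
        rw [Real.dist_eq, sub_zero] at this
        calc K * (δ ^ a / (1 - δ)) * ‖u 0‖
            ≤ |K * (δ ^ a / (1 - δ)) * ‖u 0‖| := le_abs_self _
          _ < ε := this
      have hmem : d (v a) (v b) ∈ P := by simpa [coneLe] using hd0 (v a) (v b)
      have := hsmall _ hmem (lt_of_le_of_lt h1 h2)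
      simpa [coneLt] using this
    rcases le_total n m with h | h
    · exact key n m hn h
    · have := key m n hm h
      simpa [coneLt, hdsym (v n) (v m)] using this
  exact hcomp v hcauchy
end

section
/- Let (M,d) be a cone metric space over a normal cone with normal constant K, and T,S : M → M with S a T-Zamfirescu mapping. Then there exists h ∈ [0,1) such that for all x₀ ∈ M and all n ≥ 1, d(TSⁿ⁺¹x₀, TSⁿx₀) ≤ hⁿ · d(TSx₀, Tx₀) in the cone order. -/
open Filter Topology

variable {E : Type*}

theorem tz_geometric_bound {E M : Type*} [NormedAddCommGroup E]
    [NormedSpace ℝ E] [CompleteSpace E] (P : Set E) (K : ℝ) (hP : IsCone P)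
    (hK : IsNormalCone P K) (d : M → M → E) (hd : IsConeMetric P d)
    (T S : M → M) (hTZ : TZamfirescu P d T S) :
    ∃ h : ℝ, 0 ≤ h ∧ h < 1 ∧ ∀ (x₀ : M) (n : ℕ), 1 ≤ n →
      coneLe P (d (T (S^[n + 1] x₀)) (T (S^[n] x₀)))
        (h ^ n • d (T (S x₀)) (T x₀)) := by

  obtain ⟨a, b, c, ha0, ha1, hb0, hb1, hc0, hc1, hZ⟩ := hTZ
  obtain ⟨hclosed, hne, hne0, hcomb, hpoint⟩ := hP
  obtain ⟨hpos, heq, hsymm, htri⟩ := hd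
  have hmem_smul : ∀ (t : ℝ), 0 ≤ t → ∀ x ∈ P, t • x ∈ P := by
    intro t ht x hx
    have := hcomb t 0 ht le_rfl x hx x hx
    simpa using this
  have hmem_add : ∀ x ∈ P, ∀ y ∈ P, x + y ∈ P := by
    intro x hx y hy
    have := hcomb 1 1 zero_le_one zero_le_one x hx y hy
    simpa using this
  have htrans : ∀ x y z : E, coneLe P x y → coneLe P y z → coneLe P x z := by
    intro x y z h1 h2
    have := hmem_add _ h2 _ h1
    simpa [coneLe, sub_add_sub_cancel] using this
  have hsmul_mono : ∀ (t : ℝ), 0 ≤ t → ∀ x y : E, coneLe P x y →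
      coneLe P (t • x) (t • y) := by
    intro t ht x y hxy
    have := hmem_smul t ht _ hxy
    simpa [coneLe, smul_sub] using this
  -- key reduction: from v ≤ t•(u+v) deduce v ≤ (t/(1-t))•u
  have key : ∀ (t : ℝ), 0 ≤ t → t < 1/2 → ∀ u v : E,
      coneLe P v (t • (u + v)) → coneLe P v ((t / (1 - t)) • u) := by
    intro t ht ht2 u v hv
    have h1t : (0:ℝ) < 1 - t := by linarith
    have hmem : (1 - t)⁻¹ • (t • (u + v) - v) ∈ P :=
      hmem_smul _ (le_of_lt (inv_pos.mpr h1t)) _ hv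
    have e : (1 - t)⁻¹ • (t • (u + v) - v) = (t / (1 - t)) • u - v := by
      have h1t' : (1 - t) ≠ 0 := ne_of_gt h1t
      match_scalars <;> field_simp <;> ring
    rw [e] at hmem
    exact hmem
  set b' : ℝ := b / (1 - b) with hb'
  set c' : ℝ := c / (1 - c) with hc'
  have hb1t : (0:ℝ) < 1 - b := by linarith
  have hc1t : (0:ℝ) < 1 - c := by linarith
  have hb'0 : 0 ≤ b' := div_nonneg hb0 (le_of_lt hb1t)
  have hc'0 : 0 ≤ c' := div_nonneg hc0 (le_of_lt hc1t)
  have hb'1 : b' < 1 := by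
    rw [hb', div_lt_one hb1t]; linarith
  have hc'1 : c' < 1 := by
    rw [hc', div_lt_one hc1t]; linarith
  set h : ℝ := max a (max b' c') with hh
  have hh0 : 0 ≤ h := le_trans ha0 (le_max_left _ _)
  have hh1 : h < 1 := by
    simp only [hh, max_lt_iff]
    exact ⟨ha1, hb'1, hc'1⟩
  refine ⟨h, hh0, hh1, ?_⟩
  intro x₀ n hn
  set u : ℕ → E := fun m => d (T (S^[m + 1] x₀)) (T (S^[m] x₀)) with hudef
  -- upgrade a bound with smaller coefficient to bound with h
  have upgrade : ∀ (t : ℝ), 0 ≤ t → t ≤ h → ∀ m, coneLe P (u (m+1)) (t • u m) →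
      coneLe P (u (m+1)) (h • u m) := by
    intro t ht hth m hb
    have hum : u m ∈ P := by simpa [coneLe, u] using hpos (T (S^[m+1] x₀)) (T (S^[m] x₀))
    have : (t • u m - u (m+1)) + (h - t) • u m ∈ P :=
      hmem_add _ hb _ (hmem_smul _ (by linarith) _ hum)
    have e : (t • u m - u (m+1)) + (h - t) • u m = h • u m - u (m+1) := by
      rw [sub_smul]; abel
    rwa [e] at this
  have step : ∀ m, coneLe P (u (m+1)) (h • u m) := by
    intro m
    have hit1 : S^[m+1] x₀ = S (S^[m] x₀) := Function.iterate_succ_apply' S m x₀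
    have hit2 : S^[m+2] x₀ = S (S^[m+1] x₀) := Function.iterate_succ_apply' S (m+1) x₀
    rcases hZ (S^[m+1] x₀) (S^[m] x₀) with hcase | hcase | hcase
    · -- case 1
      apply upgrade a ha0 (le_max_left _ _) m
      simpa only [u, ← hit1, ← hit2] using hcase
    · -- case 2
      apply upgrade b' hb'0 (le_trans (le_max_left _ _) (le_max_right _ _)) m
      apply key b hb0 hb1
      have : coneLe P (u (m+1)) (b • (u (m+1) + u m)) := by
        have e1 : d (T (S^[m+1] x₀)) (T (S (S^[m+1] x₀))) = u (m+1) := by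
          rw [← hit2, hsymm]
        have e2 : d (T (S^[m] x₀)) (T (S (S^[m] x₀))) = u m := by
          rw [← hit1, hsymm]
        have := hcase
        rw [e1, e2, ← hit1, ← hit2] at this
        exact this
      rwa [add_comm (u (m+1)) (u m)] at this
    · -- case 3
      apply upgrade c' hc'0 (le_trans (le_max_right _ _) (le_max_right _ _)) m
      apply key c hc0 hc1
      have e0 : d (T (S^[m+1] x₀)) (T (S (S^[m] x₀))) = 0 := by
        rw [← hit1, (heq _ _).mpr rfl]
      have hc2 : coneLe P (u (m+1)) (c • d (T (S^[m] x₀)) (T (S^[m+2] x₀))) := by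
        have := hcase
        rw [e0, zero_add, ← hit1, ← hit2] at this
        exact this
      have htr : coneLe P (d (T (S^[m] x₀)) (T (S^[m+2] x₀))) (u m + u (m+1)) := by
        have := htri (T (S^[m] x₀)) (T (S^[m+2] x₀)) (T (S^[m+1] x₀))
        have e1 : d (T (S^[m] x₀)) (T (S^[m+1] x₀)) = u m := hsymm _ _
        have e2 : d (T (S^[m+1] x₀)) (T (S^[m+2] x₀)) = u (m+1) := hsymm _ _
        rwa [e1, e2] at this
      exact htrans _ _ _ hc2 (hsmul_mono c hc0 _ _ htr)
  have main : ∀ m, coneLe P (u m) (h ^ m • u 0) := by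
    intro m
    induction m with
    | zero =>
      have hzero : (0:E) ∈ P := by
        obtain ⟨x, hx⟩ := hne
        simpa using hcomb 0 0 le_rfl le_rfl x hx x hx
      simpa [coneLe] using hzero
    | succ k ih =>
      have h1 : coneLe P (u (k+1)) (h • u k) := step k
      have h2 : coneLe P (h • u k) (h • (h ^ k • u 0)) := hsmul_mono h hh0 _ _ ih
      have := htrans _ _ _ h1 h2
      rwa [smul_smul, ← pow_succ'] at this
  have := main n
  simpa [u, Function.iterate_one] using this
end

section
/- Let (M,d) be a cone metric space over a normal cone P with normal constant K, and (xₙ) a sequence in M. Then (xₙ) is Cauchy (in the cone sense: for every c ∈ E with 0 ≪ c there is n₀ such that d(xₙ,xₘ) ≪ c for all n,m ≥ n₀) if and only if lim_{n,m→∞} ‖d(xₙ,xₘ)‖ = 0. -/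
open Filter Topology Pointwise

variable {E : Type*}

theorem cone_cauchy_iff_norm_tendsto_zero {E M : Type*} [NormedAddCommGroup E]
    [NormedSpace ℝ E] [CompleteSpace E] (P : Set E) (K : ℝ) (hP : IsCone P)
    (hint : (interior P).Nonempty) (hK : IsNormalCone P K)
    (d : M → M → E) (hd : IsConeMetric P d) (s : ℕ → M) :
    ConeCauchy P d s ↔
      Filter.Tendsto (fun p : ℕ × ℕ => ‖d (s p.1) (s p.2)‖)
        Filter.atTop (nhds 0) := by
  obtain ⟨hclosed, ⟨x₀, hx₀⟩, hne, hcone, hpointed⟩ := hP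
  obtain ⟨K0, hnorm⟩ := hK
  obtain ⟨c₀, hc₀⟩ := hint
  have hsmulP : ∀ t : ℝ, 0 ≤ t → ∀ x ∈ P, t • x ∈ P := by
    intro t ht x hx
    have := hcone t 0 ht le_rfl x hx x hx
    simpa using this
  have hsmulInt : ∀ t : ℝ, 0 < t → ∀ x ∈ interior P, t • x ∈ interior P := by
    intro t ht x hx
    have h1 : t • interior P ⊆ interior P := by
      rw [← interior_smul₀ (ne_of_gt ht)]
      exact interior_mono (by
        rintro y ⟨z, hz, rfl⟩
        exact hsmulP t ht.le z hz)
    exact h1 ⟨x, hx, rfl⟩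
  constructor
  · intro h
    rw [Metric.tendsto_atTop]
    intro ε hε
    set t : ℝ := ε / (K * (‖c₀‖ + 1)) with ht_def
    have hden : 0 < K * (‖c₀‖ + 1) := by positivity
    have ht : 0 < t := div_pos hε hden
    have hc : coneLt P 0 (t • c₀) := by
      unfold coneLt
      rw [sub_zero]
      exact hsmulInt t ht c₀ hc₀
    obtain ⟨n₀, hn₀⟩ := h (t • c₀) hc
    refine ⟨(n₀, n₀), fun p hp => ?_⟩
    have h1 := hn₀ p.1 hp.1 p.2 hp.2
    have hle : coneLe P (d (s p.1) (s p.2)) (t • c₀) := by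
      unfold coneLe
      exact interior_subset h1
    have hb := hnorm _ _ (hd.1 (s p.1) (s p.2)) hle
    have hnc : ‖t • c₀‖ = t * ‖c₀‖ := by
      rw [norm_smul, Real.norm_of_nonneg ht.le]
    rw [Real.dist_eq, sub_zero, abs_of_nonneg (norm_nonneg _)]
    calc ‖d (s p.1) (s p.2)‖ ≤ K * ‖t • c₀‖ := hb
      _ = t * (K * ‖c₀‖) := by rw [hnc]; ring
      _ < t * (K * (‖c₀‖ + 1)) := by
          apply mul_lt_mul_of_pos_left _ ht
          have : (0:ℝ) < K := K0
          nlinarith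
      _ = ε := by
          rw [ht_def]
          field_simp
  · intro h c hc
    unfold coneLt at hc
    rw [sub_zero] at hc
    obtain ⟨r, hr, hball⟩ := Metric.isOpen_iff.mp isOpen_interior c hc
    have hball' : Metric.ball c r ⊆ interior P := hball
    rw [Metric.tendsto_atTop] at h
    obtain ⟨N, hN⟩ := h r hr
    refine ⟨max N.1 N.2, fun n hn m hm => ?_⟩
    have hp : N ≤ (n, m) :=
      ⟨le_trans (le_max_left _ _) hn, le_trans (le_max_right _ _) hm⟩
    have := hN (n, m) hp
    rw [Real.dist_eq, sub_zero, abs_of_nonneg (norm_nonneg _)] at this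
    unfold coneLt
    apply hball'
    rw [Metric.mem_ball, dist_eq_norm]
    simpa using this
end

section
/- Let (M,d) be a cone metric space over a normal cone P with normal constant K. If xₙ → x and yₙ → y in M (in the cone-metric sense), then d(xₙ,yₙ) → d(x,y) in the norm of E. -/
open Filter Topology

variable {E : Type*}

theorem cone_dist_tendsto {E M : Type*} [NormedAddCommGroup E]
    [NormedSpace ℝ E] [CompleteSpace E] (P : Set E) (K : ℝ) (hP : IsCone P)
    (hint : (interior P).Nonempty) (hK : IsNormalCone P K)
    (d : M → M → E) (hd : IsConeMetric P d)
    (xs ys : ℕ → M) (x y : M)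
    (hx : ConeConverges P d xs x) (hy : ConeConverges P d ys y) :
    Filter.Tendsto (fun n : ℕ => d (xs n) (ys n)) Filter.atTop (nhds (d x y)) := by

  -- basic cone facts
  have padd : ∀ u ∈ P, ∀ v ∈ P, u + v ∈ P := by
    intro u hu v hv
    have := hP.2.2.2.1 1 1 zero_le_one zero_le_one u hu v hv
    simpa using this
  obtain ⟨e, he⟩ := hint
  rw [Metric.tendsto_atTop]
  intro ε hε
  have hKpos : 0 < K := hK.1
  have hden : 0 < (4*K+2) * (‖e‖+1) := by positivity
  set t : ℝ := ε / ((4*K+2) * (‖e‖+1)) with ht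
  have htpos : 0 < t := div_pos hε hden
  set c : E := t • e with hc
  -- c ∈ interior P
  have hcint : c ∈ interior P := by
    have hopen : IsOpen ((fun v => t • v) '' interior P) :=
      (isOpenMap_smul₀ (G₀ := ℝ) (ne_of_gt htpos)) _ isOpen_interior
    have hsub : (fun v => t • v) '' interior P ⊆ P := by
      rintro _ ⟨u, hu, rfl⟩
      have := hP.2.2.2.1 t 0 htpos.le le_rfl u (interior_subset hu) u (interior_subset hu)
      simpa using this
    exact interior_maximal hsub hopen ⟨e, he, rfl⟩
  obtain ⟨n₁, hn₁⟩ := hx c (by simpa [coneLt] using hcint)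
  obtain ⟨n₂, hn₂⟩ := hy c (by simpa [coneLt] using hcint)
  refine ⟨n₁ + n₂ + 1, fun n hn => ?_⟩
  have hgt1 : n > n₁ := by omega
  have hgt2 : n > n₂ := by omega
  have ha : c - d (xs n) x ∈ P := interior_subset (hn₁ n hgt1)
  have hb : c - d (ys n) y ∈ P := interior_subset (hn₂ n hgt2)
  have sym := hd.2.2.1
  have tri : ∀ a b z : M, d a z + d z b - d a b ∈ P := hd.2.2.2
  -- h1 : a + Dn + b - D ∈ P
  have h1 : d (xs n) x + d (xs n) (ys n) + d (ys n) y - d x y ∈ P := by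
    have t1 := tri x y (xs n)
    have t2 := tri (xs n) y (ys n)
    have := padd _ t1 _ t2
    have heq : d x (xs n) + d (xs n) y - d x y + (d (xs n) (ys n) + d (ys n) y - d (xs n) y)
        = d (xs n) x + d (xs n) (ys n) + d (ys n) y - d x y := by
      rw [sym x (xs n)]; abel
    rwa [heq] at this
  -- h2 : a + D + b - Dn ∈ P
  have h2 : d (xs n) x + d x y + d (ys n) y - d (xs n) (ys n) ∈ P := by
    have t1 := tri (xs n) (ys n) x
    have t2 := tri x (ys n) y
    have := padd _ t1 _ t2
    have heq : d (xs n) x + d x (ys n) - d (xs n) (ys n) + (d x y + d y (ys n) - d x (ys n))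
        = d (xs n) x + d x y + d (ys n) y - d (xs n) (ys n) := by
      rw [sym y (ys n)]; abel
    rwa [heq] at this
  set u : E := d (xs n) (ys n) - d x y + (c + c) with hu
  have hu1 : u ∈ P := by
    have := padd _ (padd _ h1 _ ha) _ hb
    have heq : d (xs n) x + d (xs n) (ys n) + d (ys n) y - d x y + (c - d (xs n) x)
        + (c - d (ys n) y) = u := by rw [hu]; abel
    rwa [heq] at this
  have hu2 : (c + c + c + c) - u ∈ P := by
    have := padd _ (padd _ h2 _ ha) _ hb
    have heq : d (xs n) x + d x y + d (ys n) y - d (xs n) (ys n) + (c - d (xs n) x)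
        + (c - d (ys n) y) = (c + c + c + c) - u := by rw [hu]; abel
    rwa [heq] at this
  have hnorm : ‖u‖ ≤ K * ‖c + c + c + c‖ := by
    refine hK.2 u (c+c+c+c) ?_ hu2
    simpa [coneLe] using hu1
  have hce : ‖c‖ = t * ‖e‖ := by
    rw [hc, norm_smul, Real.norm_eq_abs, abs_of_pos htpos]
  have hdn : ‖d (xs n) (ys n) - d x y‖ ≤ ‖u‖ + ‖c + c‖ := by
    have : d (xs n) (ys n) - d x y = u - (c + c) := by rw [hu]; abel
    rw [this]
    exact norm_sub_le _ _
  have h4c : ‖c + c + c + c‖ ≤ 4 * ‖c‖ := by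
    have a1 := norm_add_le (c+c+c) c
    have a2 := norm_add_le (c+c) c
    have a3 := norm_add_le c c
    linarith
  have h2c : ‖c + c‖ ≤ 2 * ‖c‖ := by
    have := norm_add_le c c; linarith
  have key : ‖d (xs n) (ys n) - d x y‖ ≤ (4*K+2) * (t * ‖e‖) := by
    calc ‖d (xs n) (ys n) - d x y‖ ≤ ‖u‖ + ‖c + c‖ := hdn
      _ ≤ K * (4 * ‖c‖) + 2 * ‖c‖ := by
          have := hnorm.trans (by nlinarith [h4c] : K * ‖c + c + c + c‖ ≤ K * (4 * ‖c‖))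
          linarith
      _ = (4*K+2) * ‖c‖ := by ring
      _ = (4*K+2) * (t * ‖e‖) := by rw [hce]
  have hlt : (4*K+2) * (t * ‖e‖) < ε := by
    have hεeq : t * ((4*K+2) * (‖e‖+1)) = ε := div_mul_cancel₀ ε (ne_of_gt hden)
    nlinarith [norm_nonneg e]
  rw [dist_eq_norm]
  exact lt_of_le_of_lt key hlt
end
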